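/- The map τ : Y → X defined by the condition ⟨τ(y), x⟩_A = φ(⟨y, x⟩_C) for all x ∈ X, y ∈ Y is the unique linear map from Y to X satisfying this condition. -/

import Mathlib

/-- A pair `(X, Y)` implementing a strong Morita equivalence of unital inclusions
`A ⊆ C` and `B ⊆ D` of unital C*-algebras: `Y` is a `C`–`D`-equivalence bimodule and
`X` is a closed subspace of `Y` which is an `A`–`B`-equivalence bimodule with the
restricted actions and inner products. -/
structure MoritaPair
    (A : Type*) [NormedRing A] [StarRing A] [CStarRing A] [NormedAlgebra ℂ A]
      [CompleteSpace A] [StarModule ℂ A]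
    (C : Type*) [NormedRing C] [StarRing C] [CStarRing C] [NormedAlgebra ℂ C]
      [CompleteSpace C] [StarModule ℂ C]
    (B : Type*) [NormedRing B] [StarRing B] [CStarRing B] [NormedAlgebra ℂ B]
      [CompleteSpace B] [StarModule ℂ B]
    (D : Type*) [NormedRing D] [StarRing D] [CStarRing D] [NormedAlgebra ℂ D]
      [CompleteSpace D] [StarModule ℂ D]
    (X : Type*) [NormedAddCommGroup X] [NormedSpace ℂ X]
    (Y : Type*) [NormedAddCommGroup Y] [NormedSpace ℂ Y] [CompleteSpace Y] where
  /-- the unital isometric *-embedding of `A` into `C` -/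
  ιA : A →⋆ₐ[ℂ] C
  /-- the unital isometric *-embedding of `B` into `D` -/
  ιB : B →⋆ₐ[ℂ] D
  ιA_isometry : Isometry ιA
  ιB_isometry : Isometry ιB
  /-- the inclusion of the closed subspace `X` into `Y` -/
  incl : X →ₗ[ℂ] Y
  incl_norm : ∀ x, ‖incl x‖ = ‖x‖
  incl_closed : IsClosed (Set.range incl)
  /-- left action of `C` on `Y` -/
  lC : C → Y → Y
  lC_one : ∀ y, lC 1 y = y
  lC_mul : ∀ c c' y, lC (c * c') y = lC c (lC c' y)
  lC_add_right : ∀ c y y', lC c (y + y') = lC c y + lC c y'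
  lC_add_left : ∀ c c' y, lC (c + c') y = lC c y + lC c' y
  lC_smul : ∀ (z : ℂ) c y, lC (z • c) y = z • lC c y
  /-- right action of `D` on `Y` -/
  rD : Y → D → Y
  rD_one : ∀ y, rD y 1 = y
  rD_mul : ∀ y d d', rD y (d * d') = rD (rD y d) d'
  rD_add_left : ∀ y y' d, rD (y + y') d = rD y d + rD y' d
  rD_add_right : ∀ y d d', rD y (d + d') = rD y d + rD y d'
  rD_smul : ∀ (z : ℂ) y d, rD y (z • d) = z • rD y d
  smul_assoc : ∀ c y d, rD (lC c y) d = lC c (rD y d)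
  /-- the left `C`-valued inner product on `Y` -/
  innC : Y → Y → C
  innC_add_left : ∀ y y' z, innC (y + y') z = innC y z + innC y' z
  innC_star : ∀ y z, star (innC y z) = innC z y
  innC_lC : ∀ c y z, innC (lC c y) z = c * innC y z
  innC_norm : ∀ y, ‖innC y y‖ = ‖y‖ ^ 2
  /-- the right `D`-valued inner product on `Y` -/
  innD : Y → Y → D
  innD_add_right : ∀ y z z', innD y (z + z') = innD y z + innD y z'
  innD_star : ∀ y z, star (innD y z) = innD z y
  innD_rD : ∀ y z d, innD y (rD z d) = innD y z * d
  innD_norm : ∀ y, ‖innD y y‖ = ‖y‖ ^ 2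
  imprimitivity : ∀ y z w, lC (innC y z) w = rD y (innD z w)
  innC_full : (Submodule.span ℂ {c : C | ∃ y z, innC y z = c}).topologicalClosure = ⊤
  innD_full : (Submodule.span ℂ {d : D | ∃ y z, innD y z = d}).topologicalClosure = ⊤
  /-- left action of `A` on `X`, the restriction of the `C`-action -/
  lA : A → X → X
  lA_compat : ∀ a x, incl (lA a x) = lC (ιA a) (incl x)
  /-- right action of `B` on `X`, the restriction of the `D`-action -/
  rB : X → B → X
  rB_compat : ∀ x b, incl (rB x b) = rD (incl x) (ιB b)
  /-- the left `A`-valued inner product on `X`, the restriction of `innC` -/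
  innA : X → X → A
  innA_compat : ∀ x z, ιA (innA x z) = innC (incl x) (incl z)
  /-- the right `B`-valued inner product on `X`, the restriction of `innD` -/
  innB : X → X → B
  innB_compat : ∀ x z, ιB (innB x z) = innD (incl x) (incl z)
  innA_full : (Submodule.span ℂ {a : A | ∃ x z, innA x z = a}).topologicalClosure = ⊤
  innB_full : (Submodule.span ℂ {b : B | ∃ x z, innB x z = b}).topologicalClosure = ⊤

variable {A : Type*} [NormedRing A] [StarRing A] [CStarRing A] [NormedAlgebra ℂ A]
  [CompleteSpace A] [StarModule ℂ A]
variable {C : Type*} [NormedRing C] [StarRing C] [CStarRing C] [NormedAlgebra ℂ C]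
  [CompleteSpace C] [StarModule ℂ C]
variable {B : Type*} [NormedRing B] [StarRing B] [CStarRing B] [NormedAlgebra ℂ B]
  [CompleteSpace B] [StarModule ℂ B]
variable {D : Type*} [NormedRing D] [StarRing D] [CStarRing D] [NormedAlgebra ℂ D]
  [CompleteSpace D] [StarModule ℂ D]
variable {X : Type*} [NormedAddCommGroup X] [NormedSpace ℂ X]
variable {Y : Type*} [NormedAddCommGroup Y] [NormedSpace ℂ Y] [CompleteSpace Y]

namespace MoritaPair

variable (M : MoritaPair A C B D X Y)

lemma incl_injective : Function.Injective M.incl := by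
  intro x y h
  have : ‖x - y‖ = 0 := by rw [← M.incl_norm, map_sub, h, sub_self, norm_zero]
  rwa [norm_eq_zero, sub_eq_zero] at this

lemma ιA_injective : Function.Injective M.ιA := M.ιA_isometry.injective

lemma ιB_injective : Function.Injective M.ιB := M.ιB_isometry.injective

lemma innC_zero_left (w : Y) : M.innC 0 w = 0 := by
  have h := M.innC_add_left 0 0 w
  rw [add_zero] at h
  exact (left_eq_add.mp h)

lemma innC_smul_left (z : ℂ) (y w : Y) : M.innC (z • y) w = z • M.innC y w := by
  have h1 : z • y = M.lC (z • (1 : C)) y := by rw [M.lC_smul, M.lC_one]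
  rw [h1, M.innC_lC, smul_mul_assoc, one_mul]

lemma innC_sum_left {ι : Type*} (s : Finset ι) (f : ι → Y) (w : Y) :
    M.innC (∑ i ∈ s, f i) w = ∑ i ∈ s, M.innC (f i) w := by
  classical
  induction s using Finset.induction_on with
  | empty => simpa using M.innC_zero_left w
  | insert _ _ hi ih =>
      rw [Finset.sum_insert hi, Finset.sum_insert hi, M.innC_add_left, ih]

lemma innD_smul_right (z : ℂ) (y w : Y) : M.innD y (z • w) = z • M.innD y w := by
  have h1 : z • w = M.rD w (z • (1 : D)) := by rw [M.rD_smul, M.rD_one]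
  rw [h1, M.innD_rD, mul_smul_comm, mul_one]

lemma rD_zero_right (y : Y) : M.rD y 0 = 0 := by
  have h := M.rD_add_right y 0 0
  rw [add_zero] at h
  exact (left_eq_add.mp h)

lemma rD_sum_right {ι : Type*} (s : Finset ι) (y : Y) (f : ι → D) :
    M.rD y (∑ i ∈ s, f i) = ∑ i ∈ s, M.rD y (f i) := by
  classical
  induction s using Finset.induction_on with
  | empty => simpa using M.rD_zero_right y
  | insert _ _ hi ih =>
      rw [Finset.sum_insert hi, Finset.sum_insert hi, M.rD_add_right, ih]

lemma innA_add_left (x x' z : X) :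
    M.innA (x + x') z = M.innA x z + M.innA x' z := by
  apply M.ιA_injective
  rw [map_add, M.innA_compat, M.innA_compat, M.innA_compat, map_add, M.innC_add_left]

lemma innA_zero_left (z : X) : M.innA 0 z = 0 := by
  apply M.ιA_injective
  rw [M.innA_compat, map_zero, map_zero, M.innC_zero_left]

lemma innA_smul_left (c : ℂ) (x z : X) : M.innA (c • x) z = c • M.innA x z := by
  apply M.ιA_injective
  rw [map_smul, M.innA_compat, M.innA_compat, map_smul, M.innC_smul_left]

lemma innA_sub_left (x x' z : X) :
    M.innA (x - x') z = M.innA x z - M.innA x' z := by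
  have h := M.innA_add_left (x - x') x' z
  rw [sub_add_cancel] at h
  rw [h]; abel

lemma innA_sum_left {ι : Type*} (s : Finset ι) (f : ι → X) (z : X) :
    M.innA (∑ i ∈ s, f i) z = ∑ i ∈ s, M.innA (f i) z := by
  classical
  induction s using Finset.induction_on with
  | empty => simpa using M.innA_zero_left z
  | insert _ _ hi ih =>
      rw [Finset.sum_insert hi, Finset.sum_insert hi, M.innA_add_left, ih]

lemma innA_lA (a : A) (x z : X) : M.innA (M.lA a x) z = a * M.innA x z := by
  apply M.ιA_injective
  rw [map_mul, M.innA_compat, M.innA_compat, M.lA_compat, M.innC_lC]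

lemma lA_add (a a' : A) (x : X) : M.lA (a + a') x = M.lA a x + M.lA a' x := by
  apply M.incl_injective
  rw [map_add, M.lA_compat, M.lA_compat, M.lA_compat, map_add, M.lC_add_left]

lemma lA_smul (c : ℂ) (a : A) (x : X) : M.lA (c • a) x = c • M.lA a x := by
  apply M.incl_injective
  rw [map_smul, M.lA_compat, M.lA_compat, map_smul, M.lC_smul]

lemma innB_star (x z : X) : star (M.innB x z) = M.innB z x := by
  apply M.ιB_injective
  rw [map_star, M.innB_compat, M.innB_compat, M.innD_star]

lemma innB_rB (x z : X) (b : B) : M.innB x (M.rB z b) = M.innB x z * b := by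
  apply M.ιB_injective
  rw [map_mul, M.innB_compat, M.innB_compat, M.rB_compat, M.innD_rD]

lemma innB_smul_right (c : ℂ) (x z : X) : M.innB x (c • z) = c • M.innB x z := by
  apply M.ιB_injective
  rw [map_smul, M.innB_compat, M.innB_compat, map_smul, M.innD_smul_right]

lemma mul_innB (b : B) (x z : X) : b * M.innB x z = M.innB (M.rB x (star b)) z := by
  have h := congrArg star (M.innB_rB z x (star b))
  rw [star_mul, star_star, M.innB_star, M.innB_star] at h
  exact h.symm

/-- the extremal point: `1 : B` is a finite sum of inner products. -/
lemma exists_one_eq_sum :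
    ∃ (n : ℕ) (u v : Fin n → X), ∑ i, M.innB (u i) (v i) = 1 := by
  classical
  -- the set of finite sums of inner products
  set P : B → Prop := fun b => ∃ (n : ℕ) (u v : Fin n → X), ∑ i, M.innB (u i) (v i) = b
    with hP
  have hP0 : P 0 := ⟨0, ![], ![], by simp⟩
  have hPgen : ∀ x z : X, P (M.innB x z) := by
    intro x z
    exact ⟨1, ![x], ![z], by simp⟩
  have hPadd : ∀ b b', P b → P b' → P (b + b') := by
    rintro b b' ⟨n, u, v, rfl⟩ ⟨m, u', v', rfl⟩
    refine ⟨n + m, Fin.append u u', Fin.append v v', ?_⟩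
    rw [Fin.sum_univ_add]
    simp [Fin.append_left, Fin.append_right]
  have hPsmul : ∀ (c : ℂ) b, P b → P (c • b) := by
    rintro c b ⟨n, u, v, rfl⟩
    refine ⟨n, u, fun i => c • v i, ?_⟩
    rw [Finset.smul_sum]
    exact Finset.sum_congr rfl fun i _ => M.innB_smul_right c (u i) (v i)
  have hPmul : ∀ (b' : B) b, P b → P (b' * b) := by
    rintro b' b ⟨n, u, v, rfl⟩
    refine ⟨n, fun i => M.rB (u i) (star b'), v, ?_⟩
    rw [Finset.mul_sum]
    exact Finset.sum_congr rfl fun i _ => (M.mul_innB b' (u i) (v i)).symm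
  set S : Submodule ℂ B := Submodule.span ℂ {b : B | ∃ x z, M.innB x z = b} with hS
  have hSP : ∀ b ∈ S, P b := by
    intro b hb
    refine Submodule.span_induction ?_ hP0 (fun a b _ _ ha hb => hPadd a b ha hb)
      (fun c b _ hb => hPsmul c b hb) hb
    rintro b ⟨x, z, rfl⟩
    exact hPgen x z
  -- `1` lies in the closure of `S`
  have h1 : (1 : B) ∈ closure (S : Set B) := by
    have := M.innB_full
    rw [← hS] at this
    have h1' : (1 : B) ∈ S.topologicalClosure := this ▸ Submodule.mem_top
    exact h1'
  obtain ⟨s, hsS, hs⟩ := Metric.mem_closure_iff.mp h1 1 one_pos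
  rw [dist_eq_norm] at hs
  -- `s` is invertible
  have hs' : ‖1 - s‖ < 1 := hs
  set w : Bˣ := Units.oneSub (1 - s) hs' with hw
  have hws : (w : B) = s := by rw [hw, Units.val_oneSub, sub_sub_cancel]
  have h1s : (1 : B) = (↑w⁻¹ : B) * s := by
    rw [← hws, Units.inv_mul]
  have : P ((↑w⁻¹ : B) * s) := hPmul _ s (hSP s hsS)
  rw [← h1s] at this
  exact this

lemma innA_ext (w w' : X) (h : ∀ x : X, M.innA w x = M.innA w' x) : w = w' := by
  have hsub : M.innA (w - w') (w - w') = 0 := by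
    rw [M.innA_sub_left, h (w - w'), sub_self]
  have h2 : M.innC (M.incl (w - w')) (M.incl (w - w')) = 0 := by
    rw [← M.innA_compat, hsub, map_zero]
  have h3 : ‖M.incl (w - w')‖ ^ 2 = 0 := by rw [← M.innC_norm, h2, norm_zero]
  have h4 : ‖w - w'‖ = 0 := by
    have := M.incl_norm (w - w')
    nlinarith [norm_nonneg (w - w')]
  rw [norm_eq_zero, sub_eq_zero] at h4
  exact h4

end MoritaPair

/-- there is a unique linear map `τ : Y → X` such that
`⟨τ(y), x⟩_A = φ(⟨y, x⟩_C)` for all `x ∈ X`, `y ∈ Y`. -/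
theorem stmt0 (M : MoritaPair A C B D X Y) (φ : C →L[ℂ] A)
    (hφ : ∀ (a : A) (c : C), φ (M.ιA a * c) = a * φ c ∧ φ (c * M.ιA a) = φ c * a) :
    ∃! τ : Y →ₗ[ℂ] X, ∀ (y : Y) (x : X), M.innA (τ y) x = φ (M.innC y (M.incl x)) := by
  classical
  obtain ⟨n, u, v, huv⟩ := M.exists_one_eq_sum
  set f : Y → X := fun y => ∑ i, M.lA (φ (M.innC y (M.incl (u i)))) (v i) with hf
  have hmap : ∀ (y : Y) (x : X), M.innA (f y) x = φ (M.innC y (M.incl x)) := by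
    intro y x
    rw [hf]
    simp only
    rw [M.innA_sum_left]
    have step : ∀ i, M.innA (M.lA (φ (M.innC y (M.incl (u i)))) (v i)) x
        = φ (M.innC (M.rD y (M.innD (M.incl (u i)) (M.incl (v i)))) (M.incl x)) := by
      intro i
      rw [M.innA_lA]
      have h2 := (hφ (M.innA (v i) x) (M.innC y (M.incl (u i)))).2
      rw [← h2, M.innA_compat, ← M.innC_lC, M.imprimitivity]
    rw [Finset.sum_congr rfl fun i _ => step i, ← map_sum, ← M.innC_sum_left, ← M.rD_sum_right]
    have hone : ∑ i, M.innD (M.incl (u i)) (M.incl (v i)) = 1 := by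
      have h3 : ∑ i, M.innD (M.incl (u i)) (M.incl (v i))
          = M.ιB (∑ i, M.innB (u i) (v i)) := by
        rw [map_sum]
        exact (Finset.sum_congr rfl fun i _ => (M.innB_compat _ _).symm)
      rw [h3, huv, map_one]
    rw [hone, M.rD_one]
  refine ⟨{ toFun := f, map_add' := ?_, map_smul' := ?_ }, hmap, ?_⟩
  · intro y y'
    rw [hf]
    simp only
    rw [← Finset.sum_add_distrib]
    exact Finset.sum_congr rfl fun i _ => by
      rw [M.innC_add_left, map_add, M.lA_add]
  · intro c y
    show f (c • y) = c • f y
    rw [hf]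
    simp only
    rw [Finset.smul_sum]
    exact Finset.sum_congr rfl fun i _ => by
      rw [M.innC_smul_left, map_smul, M.lA_smul]
  · intro τ' hτ'
    ext y
    apply M.innA_ext
    intro x
    show M.innA (τ' y) x = M.innA (f y) x
    rw [hτ' y x, hmap y x]
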